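/- Let m ≥ 1 be a natural number and suppose ι is a C^{m,γ}-embedding with constant C. Then the map E¹ : ℝⁿ × X → (ℝⁿ →L[ℝ] ℝ) defined by E¹(x, f) = fderiv ℝ f̂ x (the Fréchet derivative of f̂ at x, an element of the dual of ℝⁿ) is of class C^{m−1}. -/

import Mathlib

/-- `ι : X →ₗ[ℝ] ((Fin n → ℝ) → ℝ)` is a `C^{m,γ}`-embedding with constant `C`:
for every `f : X` the function `f̂ = ι f` is `m`-times continuously differentiable,
all iterated derivatives up to order `m` are bounded by `C‖f‖`, and the `m`-th
iterated derivative is `γ`-Hölder with constant `C‖f‖`. -/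
def IsCmGammaEmbedding {X : Type*} [NormedAddCommGroup X] [NormedSpace ℝ X]
    (n : ℕ) (ι : X →ₗ[ℝ] ((Fin n → ℝ) → ℝ)) (m : ℕ) (γ C : ℝ) : Prop :=
  ∀ f : X,
    ContDiff ℝ m (ι f) ∧
    (∀ i : ℕ, i ≤ m → ∀ x : Fin n → ℝ, ‖iteratedFDeriv ℝ i (ι f) x‖ ≤ C * ‖f‖) ∧
    ∀ x y : Fin n → ℝ,
      ‖iteratedFDeriv ℝ m (ι f) x - iteratedFDeriv ℝ m (ι f) y‖ ≤ C * ‖f‖ * ‖x - y‖ ^ γ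

namespace CmGammaAux

/-- Helper instance to speed up instance synthesis for nested operator spaces. -/
noncomputable def instA (X V : Type*) [NormedAddCommGroup X] [NormedSpace ℝ X]
    [NormedAddCommGroup V] [NormedSpace ℝ V] (k : ℕ) :
    NormedAddCommGroup (X →L[ℝ] ContinuousMultilinearMap ℝ (fun _ : Fin k => V) ℝ) :=
  inferInstance

/-- Helper instance to speed up instance synthesis for nested operator spaces. -/
noncomputable def instB (X V : Type*) [NormedAddCommGroup X] [NormedSpace ℝ X]
    [NormedAddCommGroup V] [NormedSpace ℝ V] (k : ℕ) :
    NormedSpace ℝ (X →L[ℝ] ContinuousMultilinearMap ℝ (fun _ : Fin k => V) ℝ) :=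
  inferInstance

attribute [reducible] instA instB
attribute [local instance] instA instB

variable {X : Type*} [NormedAddCommGroup X] [NormedSpace ℝ X]
  {V : Type*} [NormedAddCommGroup V] [NormedSpace ℝ V]
  {γ C : ℝ} {m : ℕ}

/-- The `k`-th derivative, as a continuous linear map in `f`. -/
noncomputable def Phi (ι : X →ₗ[ℝ] (V → ℝ)) (hC : 0 ≤ C)
    (hcd : ∀ f, ContDiff ℝ m (ι f))
    (hbd : ∀ f, ∀ i : ℕ, i ≤ m → ∀ x : V, ‖iteratedFDeriv ℝ i (ι f) x‖ ≤ C * ‖f‖)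
    (k : ℕ) (hk : k ≤ m) (x : V) :
    X →L[ℝ] ContinuousMultilinearMap ℝ (fun _ : Fin k => V) ℝ :=
  LinearMap.mkContinuous
    { toFun := fun f => iteratedFDeriv ℝ k (ι f) x
      map_add' := fun f g => by
        have h1 : ContDiff ℝ k (ι f) := (hcd f).of_le (by exact_mod_cast hk)
        have h2 : ContDiff ℝ k (ι g) := (hcd g).of_le (by exact_mod_cast hk)
        show iteratedFDeriv ℝ k (ι (f + g)) x
          = iteratedFDeriv ℝ k (ι f) x + iteratedFDeriv ℝ k (ι g) x
        rw [map_add ι f g]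
        exact iteratedFDeriv_add_apply h1.contDiffAt h2.contDiffAt
      map_smul' := fun c f => by
        have h1 : ContDiff ℝ k (ι f) := (hcd f).of_le (by exact_mod_cast hk)
        show iteratedFDeriv ℝ k (ι (c • f)) x = c • iteratedFDeriv ℝ k (ι f) x
        rw [map_smul ι c f]
        exact iteratedFDeriv_const_smul_apply h1.contDiffAt }
    C (fun f => hbd f k hk x)

@[simp] lemma Phi_apply (ι : X →ₗ[ℝ] (V → ℝ)) (hC : 0 ≤ C)
    (hcd : ∀ f, ContDiff ℝ m (ι f))
    (hbd : ∀ f, ∀ i : ℕ, i ≤ m → ∀ x : V, ‖iteratedFDeriv ℝ i (ι f) x‖ ≤ C * ‖f‖)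
    (k : ℕ) (hk : k ≤ m) (x : V) (f : X) :
    Phi ι hC hcd hbd k hk x f = iteratedFDeriv ℝ k (ι f) x := rfl

/-- Unified Hölder estimate for all orders `k ≤ m`, locally. -/
lemma holder (ι : X →ₗ[ℝ] (V → ℝ)) (hγ : 0 < γ) (hγ1 : γ ≤ 1) (hC : 0 ≤ C)
    (hcd : ∀ f, ContDiff ℝ m (ι f))
    (hbd : ∀ f, ∀ i : ℕ, i ≤ m → ∀ x : V, ‖iteratedFDeriv ℝ i (ι f) x‖ ≤ C * ‖f‖)
    (hho : ∀ f, ∀ x y : V, ‖iteratedFDeriv ℝ m (ι f) x - iteratedFDeriv ℝ m (ι f) y‖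
      ≤ C * ‖f‖ * ‖x - y‖ ^ γ)
    {k : ℕ} (hk : k ≤ m) (f : X) {x y : V} (hxy : ‖x - y‖ ≤ 1) :
    ‖iteratedFDeriv ℝ k (ι f) x - iteratedFDeriv ℝ k (ι f) y‖ ≤ C * ‖f‖ * ‖x - y‖ ^ γ := by
  rcases eq_or_lt_of_le hk with rfl | hk'
  · exact hho f x y
  · -- `k < m` : mean value inequality gives a Lipschitz estimate
    have hdiff : Differentiable ℝ (iteratedFDeriv ℝ k (ι f)) :=
      (hcd f).differentiable_iteratedFDeriv (by exact_mod_cast hk')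
    have hbound : ∀ z ∈ (Set.univ : Set V), ‖fderiv ℝ (iteratedFDeriv ℝ k (ι f)) z‖ ≤ C * ‖f‖ := by
      intro z _
      rw [norm_fderiv_iteratedFDeriv]
      exact hbd f (k + 1) hk' z
    have hlip : ‖iteratedFDeriv ℝ k (ι f) x - iteratedFDeriv ℝ k (ι f) y‖ ≤ C * ‖f‖ * ‖x - y‖ :=
      Convex.norm_image_sub_le_of_norm_fderiv_le (fun z _ => hdiff z)
        hbound convex_univ (Set.mem_univ y) (Set.mem_univ x)
    refine hlip.trans ?_
    have hfC : 0 ≤ C * ‖f‖ := mul_nonneg hC (norm_nonneg f)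
    rcases eq_or_lt_of_le (norm_nonneg (x - y)) with h0 | h0
    · rw [← h0, Real.zero_rpow (ne_of_gt hγ)]
    · have : ‖x - y‖ ≤ ‖x - y‖ ^ γ := by
        calc ‖x - y‖ = ‖x - y‖ ^ (1 : ℝ) := (Real.rpow_one _).symm
        _ ≤ ‖x - y‖ ^ γ := Real.rpow_le_rpow_of_exponent_ge h0 hxy hγ1
      exact mul_le_mul_of_nonneg_left this hfC

/-- Operator-norm Hölder estimate for `Phi`. -/
lemma holder_Phi (ι : X →ₗ[ℝ] (V → ℝ)) (hγ : 0 < γ) (hγ1 : γ ≤ 1) (hC : 0 ≤ C)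
    (hcd : ∀ f, ContDiff ℝ m (ι f))
    (hbd : ∀ f, ∀ i : ℕ, i ≤ m → ∀ x : V, ‖iteratedFDeriv ℝ i (ι f) x‖ ≤ C * ‖f‖)
    (hho : ∀ f, ∀ x y : V, ‖iteratedFDeriv ℝ m (ι f) x - iteratedFDeriv ℝ m (ι f) y‖
      ≤ C * ‖f‖ * ‖x - y‖ ^ γ)
    {k : ℕ} (hk : k ≤ m) {x y : V} (hxy : ‖x - y‖ ≤ 1) :
    ‖Phi ι hC hcd hbd k hk x - Phi ι hC hcd hbd k hk y‖ ≤ C * ‖x - y‖ ^ γ := by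
  refine ContinuousLinearMap.opNorm_le_bound _
    (mul_nonneg hC (Real.rpow_nonneg (norm_nonneg _) _)) (fun f => ?_)
  have := holder ι hγ hγ1 hC hcd hbd hho hk f hxy
  simpa [mul_comm, mul_assoc, mul_left_comm] using this

lemma small_aux (hγ : 0 < γ) (hC : 0 ≤ C) {ε : ℝ} (hε : 0 < ε) :
    ∃ δ > 0, δ ≤ 1 ∧ ∀ t : ℝ, 0 ≤ t → t < δ → C * t ^ γ < ε := by
  have hC1 : (0:ℝ) < C + 1 := by linarith
  have hq : 0 < ε / (C + 1) := div_pos hε hC1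
  refine ⟨min 1 ((ε / (C + 1)) ^ (1/γ)), lt_min one_pos (Real.rpow_pos_of_pos hq _),
    min_le_left _ _, fun t ht htδ => ?_⟩
  have ht1 : t ≤ (ε / (C + 1)) ^ (1/γ) := le_of_lt (lt_of_lt_of_le htδ (min_le_right _ _))
  have h2 : t ^ γ ≤ ((ε / (C + 1)) ^ (1/γ)) ^ γ := Real.rpow_le_rpow ht ht1 (le_of_lt hγ)
  have h3 : ((ε / (C + 1)) ^ (1/γ)) ^ γ = ε / (C + 1) := by
    rw [← Real.rpow_mul (le_of_lt hq), one_div_mul_cancel (ne_of_gt hγ), Real.rpow_one]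
  have h4 : C * t ^ γ ≤ C * (ε / (C + 1)) :=
    mul_le_mul_of_nonneg_left (h3 ▸ h2) hC
  refine lt_of_le_of_lt h4 ?_
  have h5 : C / (C + 1) < 1 := (div_lt_one hC1).2 (by linarith)
  calc C * (ε / (C + 1)) = (C / (C + 1)) * ε := by ring
  _ < 1 * ε := by exact mul_lt_mul_of_pos_right h5 hε
  _ = ε := one_mul ε

/-- `Phi k` is continuous. -/
lemma continuous_Phi (ι : X →ₗ[ℝ] (V → ℝ)) (hγ : 0 < γ) (hγ1 : γ ≤ 1) (hC : 0 ≤ C)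
    (hcd : ∀ f, ContDiff ℝ m (ι f))
    (hbd : ∀ f, ∀ i : ℕ, i ≤ m → ∀ x : V, ‖iteratedFDeriv ℝ i (ι f) x‖ ≤ C * ‖f‖)
    (hho : ∀ f, ∀ x y : V, ‖iteratedFDeriv ℝ m (ι f) x - iteratedFDeriv ℝ m (ι f) y‖
      ≤ C * ‖f‖ * ‖x - y‖ ^ γ)
    {k : ℕ} (hk : k ≤ m) :
    Continuous (fun x => Phi ι hC hcd hbd k hk x) := by
  refine Metric.continuous_iff.mpr fun b ε hε => ?_
  obtain ⟨δ, hδ0, hδ1, hδ⟩ := small_aux hγ hC hε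
  refine ⟨δ, hδ0, fun a hab => ?_⟩
  rw [dist_eq_norm] at hab ⊢
  have h1 : ‖a - b‖ ≤ 1 := le_trans (le_of_lt hab) hδ1
  exact lt_of_le_of_lt (holder_Phi ι hγ hγ1 hC hcd hbd hho hk h1)
    (hδ _ (norm_nonneg _) hab)

/-- The currying rearrangement, as a continuous linear map. -/
noncomputable def bigG (X : Type*) [NormedAddCommGroup X] [NormedSpace ℝ X]
    (V : Type*) [NormedAddCommGroup V] [NormedSpace ℝ V] (k : ℕ) :
    (X →L[ℝ] ContinuousMultilinearMap ℝ (fun _ : Fin (k+1) => V) ℝ) →L[ℝ]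
      (V →L[ℝ] (X →L[ℝ] ContinuousMultilinearMap ℝ (fun _ : Fin k => V) ℝ)) :=
  ((ContinuousLinearMap.flipₗᵢ ℝ X V
      (ContinuousMultilinearMap ℝ (fun _ : Fin k => V) ℝ)).toContinuousLinearEquiv.toContinuousLinearMap).comp
    (ContinuousLinearMap.compL ℝ X
      (ContinuousMultilinearMap ℝ (fun _ : Fin (k+1) => V) ℝ)
      (V →L[ℝ] ContinuousMultilinearMap ℝ (fun _ : Fin k => V) ℝ)
      ((continuousMultilinearCurryLeftEquiv ℝ (fun _ : Fin (k+1) => V)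
        ℝ).toContinuousLinearEquiv.toContinuousLinearMap))

@[simp] lemma bigG_apply {k : ℕ}
    (T : X →L[ℝ] ContinuousMultilinearMap ℝ (fun _ : Fin (k+1) => V) ℝ) (v : V) (f : X) :
    bigG X V k T v f =
      (continuousMultilinearCurryLeftEquiv ℝ (fun _ : Fin (k+1) => V) ℝ) (T f) v := rfl

/-- The derivative of `Phi k` is `bigG (Phi (k+1))`. -/
lemma hasFDerivAt_Phi (ι : X →ₗ[ℝ] (V → ℝ)) (hγ : 0 < γ) (hγ1 : γ ≤ 1) (hC : 0 ≤ C)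
    (hcd : ∀ f, ContDiff ℝ m (ι f))
    (hbd : ∀ f, ∀ i : ℕ, i ≤ m → ∀ x : V, ‖iteratedFDeriv ℝ i (ι f) x‖ ≤ C * ‖f‖)
    (hho : ∀ f, ∀ x y : V, ‖iteratedFDeriv ℝ m (ι f) x - iteratedFDeriv ℝ m (ι f) y‖
      ≤ C * ‖f‖ * ‖x - y‖ ^ γ)
    {k : ℕ} (hk : k < m) (x₀ : V) :
    HasFDerivAt (fun x => Phi ι hC hcd hbd k (le_of_lt hk) x)
      (bigG X V k (Phi ι hC hcd hbd (k+1) hk x₀)) x₀ := by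
  refine HasFDerivAt.of_isLittleO ?_
  rw [Asymptotics.isLittleO_iff]
  intro c hc
  obtain ⟨δ, hδ0, hδ1, hδ⟩ := small_aux hγ hC hc
  rw [Metric.eventually_nhds_iff]
  refine ⟨δ, hδ0, fun y hy => ?_⟩
  rw [dist_eq_norm] at hy
  have hy1 : ‖y - x₀‖ ≤ 1 := le_trans (le_of_lt hy) hδ1
  -- operator norm bound
  have key : ∀ f : X,
      ‖iteratedFDeriv ℝ k (ι f) y - iteratedFDeriv ℝ k (ι f) x₀
        - (bigG X V k (Phi ι hC hcd hbd (k+1) hk x₀)) (y - x₀) f‖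
      ≤ (C * ‖f‖ * ‖y - x₀‖ ^ γ) * ‖y - x₀‖ := by
    intro f
    have hdiff : Differentiable ℝ (iteratedFDeriv ℝ k (ι f)) :=
      (hcd f).differentiable_iteratedFDeriv (by exact_mod_cast hk)
    have heq : ∀ v : V, (bigG X V k (Phi ι hC hcd hbd (k+1) hk x₀)) v f
        = fderiv ℝ (iteratedFDeriv ℝ k (ι f)) x₀ v := by
      intro v
      rw [bigG_apply, Phi_apply, fderiv_iteratedFDeriv]
      rfl
    rw [heq]
    -- mean value inequality on the ball of radius `‖y - x₀‖`
    refine Convex.norm_image_sub_le_of_norm_fderiv_le'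
      (fun z _ => hdiff z) (fun z hz => ?_)
      (convex_closedBall x₀ ‖y - x₀‖) (Metric.mem_closedBall_self (norm_nonneg _))
      (by simpa [Metric.mem_closedBall, dist_eq_norm] using le_refl ‖y - x₀‖)
    -- ‖fderiv (iFD k) z - fderiv (iFD k) x₀‖ ≤ C ‖f‖ ‖y - x₀‖ ^ γ
    have hz' : ‖z - x₀‖ ≤ ‖y - x₀‖ := by
      simpa [Metric.mem_closedBall, dist_eq_norm] using hz
    have h1 : ‖fderiv ℝ (iteratedFDeriv ℝ k (ι f)) z - fderiv ℝ (iteratedFDeriv ℝ k (ι f)) x₀‖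
        = ‖iteratedFDeriv ℝ (k+1) (ι f) z - iteratedFDeriv ℝ (k+1) (ι f) x₀‖ := by
      rw [fderiv_iteratedFDeriv]
      simp only [Function.comp_apply]
      rw [← LinearIsometryEquiv.map_sub]
      exact LinearIsometryEquiv.norm_map _ _
    rw [h1]
    refine le_trans (holder ι hγ hγ1 hC hcd hbd hho hk f (le_trans hz' hy1)) ?_
    exact mul_le_mul_of_nonneg_left
      (Real.rpow_le_rpow (norm_nonneg _) hz' (le_of_lt hγ))
      (mul_nonneg hC (norm_nonneg f))
  have opbd : ‖Phi ι hC hcd hbd k (le_of_lt hk) y - Phi ι hC hcd hbd k (le_of_lt hk) x₀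
      - (bigG X V k (Phi ι hC hcd hbd (k+1) hk x₀)) (y - x₀)‖
      ≤ (C * ‖y - x₀‖ ^ γ) * ‖y - x₀‖ := by
    refine ContinuousLinearMap.opNorm_le_bound _
      (mul_nonneg (mul_nonneg hC (Real.rpow_nonneg (norm_nonneg _) _)) (norm_nonneg _))
      (fun f => ?_)
    have := key f
    simp only [ContinuousLinearMap.sub_apply, Phi_apply] at this ⊢
    calc ‖iteratedFDeriv ℝ k (ι f) y - iteratedFDeriv ℝ k (ι f) x₀
        - (bigG X V k (Phi ι hC hcd hbd (k+1) hk x₀)) (y - x₀) f‖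
        ≤ (C * ‖f‖ * ‖y - x₀‖ ^ γ) * ‖y - x₀‖ := this
      _ = C * ‖y - x₀‖ ^ γ * ‖y - x₀‖ * ‖f‖ := by ring
  refine le_trans opbd ?_
  have h2 : C * ‖y - x₀‖ ^ γ ≤ c := le_of_lt (hδ _ (norm_nonneg _) hy)
  exact mul_le_mul_of_nonneg_right h2 (norm_nonneg _)

/-- Main induction: `Phi k` is `C^d` whenever `k + d ≤ m`. -/
lemma contDiff_Phi (ι : X →ₗ[ℝ] (V → ℝ)) (hγ : 0 < γ) (hγ1 : γ ≤ 1) (hC : 0 ≤ C)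
    (hcd : ∀ f, ContDiff ℝ m (ι f))
    (hbd : ∀ f, ∀ i : ℕ, i ≤ m → ∀ x : V, ‖iteratedFDeriv ℝ i (ι f) x‖ ≤ C * ‖f‖)
    (hho : ∀ f, ∀ x y : V, ‖iteratedFDeriv ℝ m (ι f) x - iteratedFDeriv ℝ m (ι f) y‖
      ≤ C * ‖f‖ * ‖x - y‖ ^ γ)
    (d : ℕ) : ∀ k (hkd : k + d ≤ m),
    ContDiff ℝ d (fun x => Phi ι hC hcd hbd k (by omega) x) := by
  induction d with
  | zero =>
    intro k hkd
    exact contDiff_zero.2 (continuous_Phi ι hγ hγ1 hC hcd hbd hho (by omega))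
  | succ d ih =>
    intro k hkd
    have hk : k < m := by omega
    have hder := fun x => hasFDerivAt_Phi ι hγ hγ1 hC hcd hbd hho hk x
    have hcast : ((d + 1 : ℕ) : WithTop ℕ∞) = (d : WithTop ℕ∞) + 1 := by norm_cast
    rw [hcast, contDiff_succ_iff_fderiv]
    refine ⟨fun x => (hder x).differentiableAt, ?_, ?_⟩
    · intro h
      simp at h
    · have heq : (fderiv ℝ (fun x => Phi ι hC hcd hbd k (le_of_lt hk) x))
          = fun x => bigG X V k (Phi ι hC hcd hbd (k+1) hk x) :=
        funext fun x => (hder x).fderiv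
      rw [heq]
      exact (bigG X V k).contDiff.comp (ih (k+1) (by omega))

end CmGammaAux

/-- If `m ≥ 1` and `ι` is a `C^{m,γ}`-embedding with constant `C`, then the map
`E¹ : ℝⁿ × X → (ℝⁿ →L[ℝ] ℝ)`, `E¹(x, f) = fderiv ℝ f̂ x`, is of class `C^{m−1}`. -/
theorem fderiv_eval_contDiff {X : Type*} [NormedAddCommGroup X] [NormedSpace ℝ X]
    [CompleteSpace X]
    {n : ℕ} (hn : 0 < n) {γ C : ℝ} (hγ : 0 < γ) (hγ1 : γ < 1) (hC : 0 ≤ C)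
    (ι : X →ₗ[ℝ] ((Fin n → ℝ) → ℝ)) (m : ℕ) (hm : 1 ≤ m)
    (hemb : IsCmGammaEmbedding n ι m γ C) :
    ContDiff ℝ (m - 1 : ℕ)
      (fun p : (Fin n → ℝ) × X => fderiv ℝ (ι p.2) p.1) := by
  classical
  have hcd : ∀ f, ContDiff ℝ m (ι f) := fun f => (hemb f).1
  have hbd : ∀ f, ∀ i : ℕ, i ≤ m → ∀ x : Fin n → ℝ,
      ‖iteratedFDeriv ℝ i (ι f) x‖ ≤ C * ‖f‖ := fun f => (hemb f).2.1
  have hho : ∀ f, ∀ x y : Fin n → ℝ,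
      ‖iteratedFDeriv ℝ m (ι f) x - iteratedFDeriv ℝ m (ι f) y‖ ≤ C * ‖f‖ * ‖x - y‖ ^ γ :=
    fun f => (hemb f).2.2
  have h1 : ContDiff ℝ (m - 1 : ℕ)
      (fun x : Fin n → ℝ => CmGammaAux.Phi ι hC hcd hbd 1 hm x) :=
    CmGammaAux.contDiff_Phi ι hγ (le_of_lt hγ1) hC hcd hbd hho (m - 1) 1 (by omega)
  have h2 : ContDiff ℝ (m - 1 : ℕ)
      (fun p : (Fin n → ℝ) × X =>
        (continuousMultilinearCurryFin1 ℝ (Fin n → ℝ) ℝ)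
          (CmGammaAux.Phi ι hC hcd hbd 1 hm p.1 p.2)) := by
    exact ((continuousMultilinearCurryFin1 ℝ (Fin n → ℝ)
      ℝ).toContinuousLinearEquiv.toContinuousLinearMap).contDiff.comp
      ((h1.comp contDiff_fst).clm_apply contDiff_snd)
  convert h2 using 2 with p
  ext v
  rw [continuousMultilinearCurryFin1_apply, CmGammaAux.Phi_apply, iteratedFDeriv_one_apply]
  congr 1
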